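/- Let E be a real inner product space and let α₁,…,α_m ∈ E be finitely many vectors. Call a vector w ∈ E dominant if ⟨w, α_i⟩ ≥ 0 for every i, and for u, v ∈ E write u ⪯ v if v − u = ∑_{i=1}^{m} c_i α_i with all c_i ≥ 0. Let c ≥ 0 and suppose j, k, l, j′, k′ ∈ E are all dominant and satisfy: l ⪯ j + k, j ⪯ k′ + l, k ⪯ j′ + l, together with ‖j′‖ ≤ ‖j‖ + c and ‖k′‖ ≤ ‖k‖ + c. Then ‖l‖ ≤ ‖j‖ + ‖k‖ and |‖j‖ − ‖k‖| ≤ ‖l‖ + c. -/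

import Mathlib

/-- `w` is dominant with respect to the family `α` of vectors:
it pairs nonnegatively with every `α i`. -/
def IsDominant {E : Type*} [NormedAddCommGroup E] [InnerProductSpace ℝ E]
    {m : ℕ} (α : Fin m → E) (w : E) : Prop :=
  ∀ i, (0 : ℝ) ≤ inner ℝ w (α i)

/-- The dominance order: `u ⪯ v` iff `v − u` is a nonnegative combination of the `α i`. -/
def DomLE {E : Type*} [NormedAddCommGroup E] [InnerProductSpace ℝ E]
    {m : ℕ} (α : Fin m → E) (u v : E) : Prop :=
  ∃ c : Fin m → ℝ, (∀ i, 0 ≤ c i) ∧ v - u = ∑ i, c i • α i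

/-- If `u ⪯ v` and both `u` and `v` are dominant, then `‖u‖ ≤ ‖v‖`. -/
lemma norm_le_of_domLE {E : Type*} [NormedAddCommGroup E] [InnerProductSpace ℝ E]
    {m : ℕ} {α : Fin m → E} {u v : E}
    (hu : IsDominant α u) (hv : IsDominant α v) (h : DomLE α u v) : ‖u‖ ≤ ‖v‖ := by
  obtain ⟨d, hd, heq⟩ := h
  have key : (0 : ℝ) ≤ inner ℝ (v + u) (v - u) := by
    rw [heq, inner_sum]
    refine Finset.sum_nonneg fun i _ => ?_
    rw [real_inner_smul_right, inner_add_left]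
    exact mul_nonneg (hd i) (add_nonneg (hv i) (hu i))
  have expand : inner ℝ (v + u) (v - u) = ‖v‖ ^ 2 - ‖u‖ ^ 2 := by
    rw [inner_add_left, inner_sub_right, inner_sub_right,
      real_inner_self_eq_norm_sq, real_inner_self_eq_norm_sq,
      real_inner_comm u v]
    ring
  have h2 : ‖u‖ ^ 2 ≤ ‖v‖ ^ 2 := by linarith [key.trans_eq expand]
  nlinarith [norm_nonneg u, norm_nonneg v]

/-- Weight-lattice content of the spectral localization property: if `j, k, l, j′, k′`
are dominant, `l ⪯ j + k`, `j ⪯ k′ + l`, `k ⪯ j′ + l`, and `‖j′‖ ≤ ‖j‖ + c`,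
`‖k′‖ ≤ ‖k‖ + c`, then `‖l‖ ≤ ‖j‖ + ‖k‖` and `|‖j‖ − ‖k‖| ≤ ‖l‖ + c`. -/
theorem spectral_localization_weights {E : Type*} [NormedAddCommGroup E]
    [InnerProductSpace ℝ E] {m : ℕ} (α : Fin m → E)
    (c : ℝ) (hc : 0 ≤ c) (j k l j' k' : E)
    (hj : IsDominant α j) (hk : IsDominant α k) (hl : IsDominant α l)
    (hj' : IsDominant α j') (hk' : IsDominant α k')
    (h1 : DomLE α l (j + k)) (h2 : DomLE α j (k' + l)) (h3 : DomLE α k (j' + l))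
    (hnj : ‖j'‖ ≤ ‖j‖ + c) (hnk : ‖k'‖ ≤ ‖k‖ + c) :
    ‖l‖ ≤ ‖j‖ + ‖k‖ ∧ |‖j‖ - ‖k‖| ≤ ‖l‖ + c := by
  have hjk : IsDominant α (j + k) := fun i => by
    rw [inner_add_left]; exact add_nonneg (hj i) (hk i)
  have hk'l : IsDominant α (k' + l) := fun i => by
    rw [inner_add_left]; exact add_nonneg (hk' i) (hl i)
  have hj'l : IsDominant α (j' + l) := fun i => by
    rw [inner_add_left]; exact add_nonneg (hj' i) (hl i)
  have e1 : ‖l‖ ≤ ‖j + k‖ := norm_le_of_domLE hl hjk h1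
  have e2 : ‖j‖ ≤ ‖k' + l‖ := norm_le_of_domLE hj hk'l h2
  have e3 : ‖k‖ ≤ ‖j' + l‖ := norm_le_of_domLE hk hj'l h3
  have t1 := norm_add_le j k
  have t2 := norm_add_le k' l
  have t3 := norm_add_le j' l
  constructor
  · linarith
  · rw [abs_sub_le_iff]; constructor <;> linarith
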